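/- arXiv:1407.2511 — 3 statements merged into one kernel-verified Lean document; each statement's English description precedes it below -/
import Mathlib

section
/- Let 1 ≤ i ≤ l−1 and let π_i be the map on {0,...,2^l−1} that swaps the bits at positions i and i−1 in the binary representation of its argument, i.e., π_i(j) = (j − 2^i·b_i(j) − 2^{i−1}·b_{i−1}(j)) + 2^i·b_{i−1}(j) + 2^{i−1}·b_i(j), where b_k(j) = 1 if (j mod 2^{k+1}) ≥ 2^k and b_k(j) = 0 otherwise. Then for all j1, j2 ∈ {0,...,2^l−1}, δ(π_i(j1), π_i(j2)) ≥ δ(j1, j2) − 1. -/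
/-- `bitsAgree l j1 j2` is the largest `δ ∈ {0,...,l}` such that `j1 ≡ j2 (mod 2^δ)`. -/
def bitsAgree (l j1 j2 : ℕ) : ℕ := Nat.findGreatest (fun d => j1 % 2 ^ d = j2 % 2 ^ d) l

/-- `bbit k j = 1` if `(j mod 2^(k+1)) ≥ 2^k`, and `0` otherwise (the `k`-th bit of `j`). -/
def bbit (k j : ℕ) : ℕ := if 2 ^ k ≤ j % 2 ^ (k + 1) then 1 else 0

/-- The map swapping the bits at positions `i` and `i-1` (for `i ≥ 1`). -/
def piSwap (i j : ℕ) : ℕ :=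
  (j - 2 ^ i * bbit i j - 2 ^ (i - 1) * bbit (i - 1) j)
    + 2 ^ i * bbit (i - 1) j + 2 ^ (i - 1) * bbit i j

lemma bbit_le_one (k j : ℕ) : bbit k j ≤ 1 := by
  unfold bbit; split <;> omega

lemma decomp (k j : ℕ) : j % 2 ^ (k + 1) = 2 ^ k * bbit k j + j % 2 ^ k := by
  have h1 : j % 2 ^ k = (j % 2 ^ (k + 1)) % 2 ^ k :=
    (Nat.mod_mod_of_dvd j (pow_dvd_pow 2 k.le_succ)).symm
  have h2 : j % 2 ^ (k + 1) < 2 ^ (k + 1) := Nat.mod_lt _ (by positivity)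
  rw [pow_succ] at h2
  unfold bbit
  split_ifs with h
  · have h3 : j % 2 ^ (k + 1) % 2 ^ k = (j % 2 ^ (k + 1) - 2 ^ k) % 2 ^ k :=
      Nat.mod_eq_sub_mod h
    have h4 : (j % 2 ^ (k + 1) - 2 ^ k) % 2 ^ k = j % 2 ^ (k + 1) - 2 ^ k :=
      Nat.mod_eq_of_lt (by omega)
    omega
  · have h3 : j % 2 ^ (k + 1) % 2 ^ k = j % 2 ^ (k + 1) :=
      Nat.mod_eq_of_lt (by omega)
    omega

lemma bits_le (i j : ℕ) (hi : 1 ≤ i) :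
    2 ^ i * bbit i j + 2 ^ (i - 1) * bbit (i - 1) j ≤ j := by
  have e1 := decomp i j
  have e2 := decomp (i - 1) j
  have e3 : i - 1 + 1 = i := by omega
  rw [e3] at e2
  have h4 : j % 2 ^ (i + 1) ≤ j := Nat.mod_le _ _
  omega

lemma key (i j : ℕ) (hi : 1 ≤ i) :
    piSwap i j + 2 ^ (i - 1) * (2 * bbit i j + bbit (i - 1) j)
      = j + 2 ^ (i - 1) * (2 * bbit (i - 1) j + bbit i j) := by
  have e : 2 ^ i = 2 * 2 ^ (i - 1) := by
    rw [← pow_succ']; congr 1; omega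
  have hle := bits_le i j hi
  unfold piSwap
  rw [e] at hle ⊢
  set a := 2 ^ (i - 1) * bbit i j with ha
  set b := 2 ^ (i - 1) * bbit (i - 1) j with hb
  have h1 : 2 * 2 ^ (i - 1) * bbit i j = 2 * a := by rw [ha]; ring
  have h2 : 2 * 2 ^ (i - 1) * bbit (i - 1) j = 2 * b := by rw [hb]; ring
  have h3 : 2 ^ (i - 1) * (2 * bbit i j + bbit (i - 1) j) = 2 * a + b := by
    rw [ha, hb]; ring
  have h4 : 2 ^ (i - 1) * (2 * bbit (i - 1) j + bbit i j) = 2 * b + a := by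
    rw [ha, hb]; ring
  omega

lemma piSwap_mod (i j : ℕ) (hi : 1 ≤ i) :
    piSwap i j % 2 ^ (i - 1) = j % 2 ^ (i - 1) := by
  have k := key i j hi
  calc piSwap i j % 2 ^ (i - 1)
      = (piSwap i j + 2 ^ (i - 1) * (2 * bbit i j + bbit (i - 1) j)) % 2 ^ (i - 1) := by
        rw [Nat.add_mul_mod_self_left]
    _ = (j + 2 ^ (i - 1) * (2 * bbit (i - 1) j + bbit i j)) % 2 ^ (i - 1) := by rw [k]
    _ = j % 2 ^ (i - 1) := by rw [Nat.add_mul_mod_self_left]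

theorem delta_piSwap (l i j1 j2 : ℕ) (hi1 : 1 ≤ i) (hi2 : i ≤ l - 1)
    (h1 : j1 < 2 ^ l) (h2 : j2 < 2 ^ l) :
    bitsAgree l j1 j2 - 1 ≤ bitsAgree l (piSwap i j1) (piSwap i j2) := by
  set d := bitsAgree l j1 j2 with hd
  rcases Nat.eq_zero_or_pos d with h0 | hpos
  · simp [h0]
  have hdl : d ≤ l := Nat.findGreatest_le l
  have hd' : Nat.findGreatest (fun e => j1 % 2 ^ e = j2 % 2 ^ e) l = d := hd.symm
  have hP : j1 % 2 ^ d = j2 % 2 ^ d := (Nat.findGreatest_eq_iff.1 hd').2.1 (by omega)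
  have goal : piSwap i j1 % 2 ^ (d - 1) = piSwap i j2 % 2 ^ (d - 1) := by
    by_cases hcase : d ≤ i
    · have dvd1 : (2 : ℕ) ^ (d - 1) ∣ 2 ^ (i - 1) := pow_dvd_pow 2 (by omega)
      have dvd2 : (2 : ℕ) ^ (d - 1) ∣ 2 ^ d := pow_dvd_pow 2 (by omega)
      have m1 : piSwap i j1 ≡ j1 [MOD 2 ^ (d - 1)] :=
        Nat.ModEq.of_dvd dvd1 (piSwap_mod i j1 hi1)
      have m2 : piSwap i j2 ≡ j2 [MOD 2 ^ (d - 1)] :=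
        Nat.ModEq.of_dvd dvd1 (piSwap_mod i j2 hi1)
      have m3 : j1 ≡ j2 [MOD 2 ^ (d - 1)] := Nat.ModEq.of_dvd dvd2 hP
      exact (m1.trans m3).trans m2.symm
    · push_neg at hcase
      have dvd1 : (2 : ℕ) ^ (i + 1) ∣ 2 ^ d := pow_dvd_pow 2 (by omega)
      have dvd2 : (2 : ℕ) ^ i ∣ 2 ^ d := pow_dvd_pow 2 (by omega)
      have dvd3 : (2 : ℕ) ^ (d - 1) ∣ 2 ^ d := pow_dvd_pow 2 (by omega)
      have hmod1 : j1 % 2 ^ (i + 1) = j2 % 2 ^ (i + 1) := Nat.ModEq.of_dvd dvd1 hP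
      have hmod2 : j1 % 2 ^ i = j2 % 2 ^ i := Nat.ModEq.of_dvd dvd2 hP
      have bi : bbit i j1 = bbit i j2 := by unfold bbit; rw [hmod1]
      have bi1 : bbit (i - 1) j1 = bbit (i - 1) j2 := by
        unfold bbit
        have e3 : i - 1 + 1 = i := by omega
        rw [e3, hmod2]
      have k1 := key i j1 hi1
      have k2 := key i j2 hi1
      rw [bi, bi1] at k1
      have hjj : j1 ≡ j2 [MOD 2 ^ (d - 1)] := Nat.ModEq.of_dvd dvd3 hP
      have : piSwap i j1 + 2 ^ (i - 1) * (2 * bbit i j2 + bbit (i - 1) j2)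
          ≡ piSwap i j2 + 2 ^ (i - 1) * (2 * bbit i j2 + bbit (i - 1) j2)
            [MOD 2 ^ (d - 1)] := by
        rw [k1, k2]
        exact hjj.add_right _
      exact Nat.ModEq.add_right_cancel' _ this
  calc d - 1 ≤ Nat.findGreatest (fun e => piSwap i j1 % 2 ^ e = piSwap i j2 % 2 ^ e) l :=
        Nat.le_findGreatest (by omega) goal
    _ = bitsAgree l (piSwap i j1) (piSwap i j2) := rfl
end

section
/- In the graph G_l, for any two nodes v_i(j1), v_i(j2) in the same level i with δ(j1, j2) = δ > 0, the truncated views agree up to depth δ: V_δ(v_i(j1)) = V_δ(v_i(j2)). -/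
/-- A port-labeled network: each node `v` has degree `deg v`, and for each port
`p ∈ {1,…,deg v}`, `next v p` is the neighbor reached via port `p` and `ret v p`
is the port number of the same edge at that neighbor (i.e. `end(v,p) = λ(next(v,p), v)`). -/
structure PortNetwork (V : Type*) where
  deg : V → ℕ
  next : V → ℕ → V
  ret : V → ℕ → ℕ

/-- Coherence of a port network: following a valid port and then the corresponding
return port leads back, with matching labels. -/
def PortNetwork.Coherent {V : Type*} (N : PortNetwork V) : Prop :=
  ∀ v p, 1 ≤ p → p ≤ N.deg v →
    1 ≤ N.ret v p ∧ N.ret v p ≤ N.deg (N.next v p) ∧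
      N.next (N.next v p) (N.ret v p) = v ∧ N.ret (N.next v p) (N.ret v p) = p

/-- Trees with edges labeled by pairs of port numbers: the datatype of (truncated) views. -/
inductive ViewTree : Type
  | node : List (ℕ × ℕ × ViewTree) → ViewTree

/-- The view of node `v` truncated to depth `k`: the root has one child per port
`p ∈ {1,…,deg v}`, the corresponding edge carrying the label pair `(p, end(v,p))`,
and the child subtree is the view of `next v p` truncated to depth `k-1`. -/
def view {V : Type*} (N : PortNetwork V) : ℕ → V → ViewTree
  | 0, _ => ViewTree.node []
  | k + 1, v => ViewTree.node
      ((List.range (N.deg v)).map fun t =>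
        (t + 1, N.ret v (t + 1), view N k (N.next v (t + 1))))

/-- A list of ports is a valid walk from `v` if each successive port is legal
at the node reached so far. -/
def ValidWalk {V : Type*} (N : PortNetwork V) : V → List ℕ → Prop
  | _, [] => True
  | v, p :: ps => 1 ≤ p ∧ p ≤ N.deg v ∧ ValidWalk N (N.next v p) ps

/-- The endpoint of the walk from `v` following the given list of ports. -/
def walkEnd {V : Type*} (N : PortNetwork V) : V → List ℕ → V
  | v, [] => v
  | v, p :: ps => walkEnd N (N.next v p) ps

/-- The signature of a walk: the list of pairs (outgoing port, incoming port at the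
other end) of the successively traversed edges. Two walks are isomorphic iff their
signatures are equal. -/
def walkSig {V : Type*} (N : PortNetwork V) : V → List ℕ → List (ℕ × ℕ)
  | _, [] => []
  | v, p :: ps => (p, N.ret v p) :: walkSig N (N.next v p) ps

/-- The permutation `π_i`: identity for `i = 0`, bit swap of positions `i, i-1` otherwise. -/
def piPerm (i j : ℕ) : ℕ := if i = 0 then j else piSwap i j

/-- The port-labeled graph `G_l` of the paper, on nodes `v_i(j) = (i, j)` with levels
`i ∈ {0,…,l+1}` and columns `j ∈ {0,…,2^l-1}`.
* Stage 1: a matching inside level 0 joining `v_0(j)` and `v_0(j ^^^ 1)`, with port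
  `1 + ((j+1) mod 2)` at `v_0(j)`.
* Stage 2: a clique inside level `l+1`, with `λ(v_{l+1}(j), v_{l+1}((j+p) mod 2^l)) = p`.
* Stage 3: edges from `v_{l+1}(j)` to `v_i(j)` for every `i ≤ l`, with port `2^l + i`
  at the top and port `1` (or `1 + (j mod 2)` at level 0) at the bottom.
* Stage 4: matchings between consecutive levels via `π_i`, with ports `3` (up), `2` (down). -/
def Gl (l : ℕ) : PortNetwork (ℕ × ℕ) where
  deg := fun v => if v.1 = l + 1 then 2 ^ l + l else if v.1 = l then 2 else 3
  next := fun v p =>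
    if v.1 = l + 1 then
      (if p ≤ 2 ^ l - 1 then (l + 1, (v.2 + p) % 2 ^ l) else (p - 2 ^ l, v.2))
    else if v.1 = 0 then
      (if p = 3 then (1, v.2)
       else if p = 1 + v.2 % 2 then (l + 1, v.2)
       else (0, v.2 ^^^ 1))
    else
      (if p = 1 then (l + 1, v.2)
       else if p = 2 then (v.1 - 1, piPerm (v.1 - 1) v.2)
       else (v.1 + 1, piPerm v.1 v.2))
  ret := fun v p =>
    if v.1 = l + 1 then
      (if p ≤ 2 ^ l - 1 then 2 ^ l - p
       else if p = 2 ^ l then 1 + v.2 % 2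
       else 1)
    else if v.1 = 0 then
      (if p = 3 then 2
       else if p = 1 + v.2 % 2 then 2 ^ l
       else 1 + v.2 % 2)
    else
      (if p = 1 then 2 ^ l + v.1
       else if p = 2 then 3
       else 2)

/-- Congruence modulo a larger power of two implies congruence modulo a smaller one. -/
lemma modc {j1 j2 : ℕ} (a : ℕ) {b : ℕ} (hab : a ≤ b) (h : j1 % 2 ^ b = j2 % 2 ^ b) :
    j1 % 2 ^ a = j2 % 2 ^ a := by
  rw [← Nat.mod_mod_of_dvd j1 (pow_dvd_pow 2 hab), ← Nat.mod_mod_of_dvd j2 (pow_dvd_pow 2 hab), h]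

lemma bbit_congr {m k j1 j2 : ℕ} (hm : m + 1 ≤ k) (h : j1 % 2 ^ k = j2 % 2 ^ k) :
    bbit m j1 = bbit m j2 := by
  unfold bbit
  rw [modc (m + 1) hm h]

lemma two_bits_le (m j : ℕ) : 2 ^ (m + 1) * bbit (m + 1) j + 2 ^ m * bbit m j ≤ j := by
  unfold bbit
  have hBA : j % 2 ^ (m + 1) = j % 2 ^ (m + 1 + 1) % 2 ^ (m + 1) :=
    (Nat.mod_mod_of_dvd j (pow_dvd_pow 2 (Nat.le_succ _))).symm
  have hAj : j % 2 ^ (m + 1 + 1) ≤ j := Nat.mod_le _ _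
  have hBj : j % 2 ^ (m + 1) ≤ j := Nat.mod_le _ _
  have hAlt : j % 2 ^ (m + 1 + 1) < 2 ^ (m + 1 + 1) := Nat.mod_lt _ (by positivity)
  have hp : (2 : ℕ) ^ (m + 1 + 1) = 2 ^ (m + 1) * 2 := pow_succ 2 (m + 1)
  split_ifs with hc1 hc2 hc2
  · have hsub : j % 2 ^ (m + 1 + 1) % 2 ^ (m + 1) = j % 2 ^ (m + 1 + 1) - 2 ^ (m + 1) := by
      rw [Nat.mod_eq_sub_mod hc1, Nat.mod_eq_of_lt (by omega)]
    omega
  · omega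
  · omega
  · omega

lemma piSwap_mod_s15 {m : ℕ} (k : ℕ) {j1 j2 : ℕ} (hm : 1 ≤ m)
    (h : j1 % 2 ^ (k + 1) = j2 % 2 ^ (k + 1)) : piSwap m j1 % 2 ^ k = piSwap m j2 % 2 ^ k := by
  obtain ⟨m, rfl⟩ : ∃ m', m = m' + 1 := ⟨m - 1, by omega⟩
  have hmk : j1 % 2 ^ k = j2 % 2 ^ k := modc k (Nat.le_succ k) h
  unfold piSwap
  simp only [Nat.add_sub_cancel]
  by_cases hcase : m + 2 ≤ k + 1
  · have e1 : bbit (m + 1) j1 = bbit (m + 1) j2 := bbit_congr hcase h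
    have e0 : bbit m j1 = bbit m j2 := bbit_congr (by omega) h
    rw [e1, e0]
    set a := 2 ^ (m + 1) * bbit (m + 1) j2 + 2 ^ m * bbit m j2 with ha
    have ha1 : a ≤ j1 := by rw [ha, ← e1, ← e0]; exact two_bits_le m j1
    have ha2 : a ≤ j2 := two_bits_le m j2
    rw [Nat.sub_sub, Nat.sub_sub]
    have hsub : j1 - a ≡ j2 - a [MOD 2 ^ k] := by
      have : j1 - a + a ≡ j2 - a + a [MOD 2 ^ k] := by
        rw [Nat.sub_add_cancel ha1, Nat.sub_add_cancel ha2]; exact hmk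
      exact Nat.ModEq.add_right_cancel' a this
    exact (hsub.add_right _).add_right _
  · have key : ∀ j : ℕ,
        (j - 2 ^ (m + 1) * bbit (m + 1) j - 2 ^ m * bbit m j + 2 ^ (m + 1) * bbit m j
          + 2 ^ m * bbit (m + 1) j) % 2 ^ k = j % 2 ^ k := by
      intro j
      have hle := two_bits_le m j
      have hdm : (2 : ℕ) ^ k ∣ 2 ^ m := pow_dvd_pow 2 (by omega)
      have hdm1 : (2 : ℕ) ^ k ∣ 2 ^ (m + 1) := pow_dvd_pow 2 (by omega)
      rw [Nat.sub_sub]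
      set a := 2 ^ (m + 1) * bbit (m + 1) j + 2 ^ m * bbit m j with ha
      have hda : (2 : ℕ) ^ k ∣ a := dvd_add (hdm1.mul_right _) (hdm.mul_right _)
      have hdc : (2 : ℕ) ^ k ∣ 2 ^ (m + 1) * bbit m j + 2 ^ m * bbit (m + 1) j :=
        dvd_add (hdm1.mul_right _) (hdm.mul_right _)
      have h1 : j - a ≡ j [MOD 2 ^ k] := by
        have : j - a + a ≡ j + 0 [MOD 2 ^ k] := by
          rw [Nat.sub_add_cancel hle, add_zero]
        have := Nat.ModEq.add_right_cancel (Nat.modEq_zero_iff_dvd.2 hda) this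
        exact this
      have h2 : j - a + (2 ^ (m + 1) * bbit m j + 2 ^ m * bbit (m + 1) j) ≡ j + 0
          [MOD 2 ^ k] := h1.add (Nat.modEq_zero_iff_dvd.2 hdc)
      have := h2
      rw [add_zero] at this
      calc (j - a + 2 ^ (m + 1) * bbit m j + 2 ^ m * bbit (m + 1) j) % 2 ^ k
          = (j - a + (2 ^ (m + 1) * bbit m j + 2 ^ m * bbit (m + 1) j)) % 2 ^ k := by
            rw [add_assoc]
        _ = j % 2 ^ k := this
    rw [key j1, key j2, hmk]

lemma piPerm_mod (m k : ℕ) {j1 j2 : ℕ}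
    (h : j1 % 2 ^ (k + 1) = j2 % 2 ^ (k + 1)) : piPerm m j1 % 2 ^ k = piPerm m j2 % 2 ^ k := by
  unfold piPerm
  split_ifs with hm
  · exact modc k (Nat.le_succ k) h
  · exact piSwap_mod_s15 k (by omega) h

lemma xor_one_mod (n : ℕ) {j1 j2 : ℕ} (h : j1 % 2 ^ n = j2 % 2 ^ n) :
    (j1 ^^^ 1) % 2 ^ n = (j2 ^^^ 1) % 2 ^ n := by
  have key : ∀ j : ℕ, (j ^^^ 1) % 2 ^ n = (j % 2 ^ n) ^^^ (1 % 2 ^ n) := by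
    intro j
    rw [← Nat.and_two_pow_sub_one_eq_mod (j ^^^ 1), Nat.and_xor_distrib_right,
      Nat.and_two_pow_sub_one_eq_mod, Nat.and_two_pow_sub_one_eq_mod]
  rw [key, key, h]

lemma view_congr (l : ℕ) : ∀ k, k ≤ l → ∀ i j1 j2, j1 % 2 ^ k = j2 % 2 ^ k →
    view (Gl l) k (i, j1) = view (Gl l) k (i, j2) := by
  intro k
  induction k with
  | zero => intro _ i j1 j2 _; rfl
  | succ k ih =>
    intro hk i j1 j2 h
    have hk' : k ≤ l := Nat.le_of_succ_le hk
    have hdvd : (2 : ℕ) ^ k ∣ 2 ^ l := pow_dvd_pow 2 hk'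
    have hmk : j1 % 2 ^ k = j2 % 2 ^ k := modc k (Nat.le_succ k) h
    have h2 : j1 % 2 = j2 % 2 := by
      have := modc 1 (by omega) h
      simpa using this
    simp only [view]
    congr 1
    rw [show (Gl l).deg (i, j1) = (Gl l).deg (i, j2) from rfl]
    apply List.map_congr_left
    intro t ht
    simp only [Prod.mk.injEq, true_and]
    by_cases hil : i = l + 1
    · subst hil
      simp only [Gl, ite_true]
      by_cases hp : t + 1 ≤ 2 ^ l - 1
      · simp only [if_pos hp]
        refine ⟨by trivial, ?_⟩
        apply ih hk'
        rw [Nat.mod_mod_of_dvd _ hdvd, Nat.mod_mod_of_dvd _ hdvd]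
        exact Nat.ModEq.add_right _ hmk
      · by_cases hp2 : t + 1 = 2 ^ l
        · simp only [if_neg hp, if_pos hp2]
          exact ⟨by rw [h2], ih hk' _ j1 j2 hmk⟩
        · simp only [if_neg hp, if_neg hp2]
          exact ⟨by trivial, ih hk' _ j1 j2 hmk⟩
    · by_cases hi0 : i = 0
      · subst hi0
        simp only [Gl, if_neg hil, ite_true]
        by_cases hp3 : t + 1 = 3
        · simp only [if_pos hp3]
          exact ⟨by trivial, ih hk' _ j1 j2 hmk⟩
        · simp only [if_neg hp3]
          rw [h2]
          by_cases hpm : t + 1 = 1 + j2 % 2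
          · simp only [if_pos hpm]
            exact ⟨by trivial, ih hk' _ j1 j2 hmk⟩
          · simp only [if_neg hpm]
            refine ⟨by trivial, ?_⟩
            apply ih hk'
            exact modc k (Nat.le_succ k) (xor_one_mod (k + 1) h)
      · simp only [Gl, if_neg hil, if_neg hi0, ite_true]
        by_cases hp1 : t + 1 = 1
        · simp only [if_pos hp1]
          exact ⟨by trivial, ih hk' _ j1 j2 hmk⟩
        · by_cases hp2 : t + 1 = 2
          · simp only [if_neg hp1, if_pos hp2]
            exact ⟨by trivial, ih hk' _ _ _ (piPerm_mod (i - 1) k h)⟩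
          · simp only [if_neg hp1, if_neg hp2]
            exact ⟨by trivial, ih hk' _ _ _ (piPerm_mod i k h)⟩

/-- In `G_l`, two nodes in the same level whose column indices agree on their
`δ > 0` rightmost bits have equal views truncated to depth `δ`. -/
theorem views_agree_in_Gl (l i j1 j2 : ℕ) (hi : i ≤ l + 1)
    (h1 : j1 < 2 ^ l) (h2 : j2 < 2 ^ l) (hδ : 0 < bitsAgree l j1 j2) :
    view (Gl l) (bitsAgree l j1 j2) (i, j1) = view (Gl l) (bitsAgree l j1 j2) (i, j2) := by
  have hle : bitsAgree l j1 j2 ≤ l := Nat.findGreatest_le l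
  have hspec : j1 % 2 ^ bitsAgree l j1 j2 = j2 % 2 ^ bitsAgree l j1 j2 :=
    Nat.findGreatest_spec (P := fun d => j1 % 2 ^ d = j2 % 2 ^ d) (Nat.zero_le l) (by simp [Nat.mod_one])
  exact view_congr l _ hle i j1 j2 hspec
end

section
/- In G_l, starting from a_l = v_l(0) and b_l = v_l(2^{l−1}) and repeatedly following port 2, after i ≤ l−1 steps the walk from a_l reaches v_{l−i}(0) and the walk from b_l reaches v_{l−i}(2^{l−1−i}). -/
lemma bbit_zero (k : ℕ) : bbit k 0 = 0 := by
  simp [bbit]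

lemma piPerm_zero (k : ℕ) : piPerm k 0 = 0 := by
  simp [piPerm, piSwap, bbit_zero]

lemma bbit_pow (k : ℕ) : bbit k (2 ^ k) = 1 := by
  simp [bbit, Nat.mod_eq_of_lt (Nat.pow_lt_pow_right one_lt_two (Nat.lt_succ_self k))]

lemma bbit_pred_pow (k : ℕ) (hk : 1 ≤ k) : bbit (k - 1) (2 ^ k) = 0 := by
  have : k - 1 + 1 = k := Nat.succ_pred_eq_of_pos hk
  simp [bbit, this, Nat.mod_self]

lemma piPerm_pow (k : ℕ) (hk : 1 ≤ k) : piPerm k (2 ^ k) = 2 ^ (k - 1) := by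
  have : k ≠ 0 := Nat.one_le_iff_ne_zero.mp hk
  simp [piPerm, this, piSwap, bbit_pow, bbit_pred_pow k hk]

/-- Starting from `a_l = v_l(0)` and `b_l = v_l(2^{l-1})` in `G_l` and repeatedly
following port `2`, after `i ≤ l-1` steps the two walks reach `v_{l-i}(0)` and
`v_{l-i}(2^{l-1-i})`, respectively. -/
theorem port_two_walk (l i : ℕ) (hl : 1 ≤ l) (hi : i ≤ l - 1) :
    (fun v => (Gl l).next v 2)^[i] (l, 0) = (l - i, 0) ∧
    (fun v => (Gl l).next v 2)^[i] (l, 2 ^ (l - 1)) = (l - i, 2 ^ (l - 1 - i)) := by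
  induction i with
  | zero => simp
  | succ i ih =>
    have hi' : i ≤ l - 1 := Nat.le_of_succ_le hi
    obtain ⟨h1, h2⟩ := ih hi'
    have hil : i + 1 ≤ l - 1 := hi
    have hile : i ≤ l - 2 := by omega
    have hm1 : l - i ≠ l + 1 := by omega
    have hm0 : l - i ≠ 0 := by omega
    rw [Function.iterate_succ_apply', Function.iterate_succ_apply', h1, h2]
    constructor
    · simp only [Gl, hm1, hm0, if_false, if_true]
      simp [hm1, hm0, piPerm_zero]
      omega
    · simp only [Gl]
      simp only [hm1, hm0, if_false]
      norm_num
      have he : l - i - 1 = l - 1 - i := by omega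
      rw [he, piPerm_pow (l - 1 - i) (by omega)]
      exact ⟨by omega, by rw [show l - 1 - i - 1 = l - 1 - (i + 1) from by omega]⟩
end
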